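/- Let A be an n×n irreducible matrix over a field F (i.e., A cannot be brought to block upper triangular form with at least two diagonal blocks by simultaneously permuting rows and columns). Let M = diag(x_1,…,x_n) + A over F[x_1,…,x_n] and let G = M^adj be its adjugate. Then every entry G_ij of G is a nonzero polynomial. -/

import Mathlib

open MvPolynomial

/-- A square matrix is irreducible if it cannot be brought, by a simultaneous
permutation of rows and columns, to a block upper triangular form with at least two
diagonal blocks; equivalently, there is no nonempty proper subset `X` of the index
set such that the block `A[Xᶜ, X]` vanishes. -/
def Matrix.IsIrreducibleBlock {α : Type*} [Fintype α] [DecidableEq α] {R : Type*} [Zero R]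
    (A : Matrix α α R) : Prop :=
  ¬∃ X : Finset α, X.Nonempty ∧ X ≠ Finset.univ ∧ ∀ i ∉ X, ∀ j ∈ X, A i j = 0

lemma reach_of_irreducible {α : Type*} [Fintype α] [DecidableEq α] {R : Type*} [Zero R]
    {A : Matrix α α R} (hA : A.IsIrreducibleBlock) (i j : α) :
    Relation.ReflTransGen (fun a b => A a b ≠ 0) i j := by
  classical
  by_contra h
  apply hA
  refine ⟨Finset.univ.filter (fun a => Relation.ReflTransGen (fun a b => A a b ≠ 0) a j),
    ⟨j, ?_⟩, ?_, ?_⟩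
  · simp [Relation.ReflTransGen.refl]
  · intro hX
    have hi : i ∈ Finset.univ.filter
        (fun a => Relation.ReflTransGen (fun a b => A a b ≠ 0) a j) := by
      rw [hX]; exact Finset.mem_univ i
    exact h (by simpa using hi)
  · intro a ha b hb
    by_contra hab
    simp only [Finset.mem_filter, Finset.mem_univ, true_and] at ha hb
    exact ha (Relation.ReflTransGen.head hab hb)

lemma path_of_reach {α : Type*} {r : α → α → Prop} {i j : α}
    (h : Relation.ReflTransGen r i j) :
    ∃ m, ∃ v : ℕ → α, v 0 = i ∧ v m = j ∧ ∀ s, s < m → r (v s) (v (s + 1)) := by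
  induction h with
  | refl => exact ⟨0, fun _ => i, rfl, rfl, fun s hs => absurd hs (by omega)⟩
  | @tail b c hab hbc ih =>
    obtain ⟨m, v, h0, hm, he⟩ := ih
    refine ⟨m + 1, fun s => if s ≤ m then v s else c, by simp [h0], by simp, ?_⟩
    intro s hs
    rcases Nat.lt_or_ge s m with h1 | h1
    · show r (if s ≤ m then v s else c) (if s + 1 ≤ m then v (s + 1) else c)
      rw [if_pos (by omega), if_pos (by omega)]
      exact he s h1
    · have hsm : s = m := by omega
      subst hsm
      show r (if s ≤ s then v s else c) (if s + 1 ≤ s then v (s + 1) else c)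
      rw [if_pos le_rfl, if_neg (by omega), hm]
      exact hbc

/-- If `A` is irreducible then every entry of the adjugate of `diag(x₁,…,xₙ) + A`
is a nonzero polynomial. -/
theorem adjugate_entries_ne_zero_of_irreducible {F : Type*} [Field F] {n : ℕ}
    (hn : 1 ≤ n) (A : Matrix (Fin n) (Fin n) F) (hA : A.IsIrreducibleBlock) :
    ∀ i j : Fin n,
      (Matrix.diagonal (fun k => (X k : MvPolynomial (Fin n) F)) + A.map C).adjugate i j
        ≠ 0 := by
  classical
  intro i j hzero
  set Mst : Matrix (Fin n) (Fin n) (MvPolynomial (Fin n) F) :=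
    Matrix.diagonal (fun k => (X k : MvPolynomial (Fin n) F)) + A.map C with hMstdef
  -- a path from i to j, of minimal length
  set P : ℕ → Prop := fun m => ∃ v : ℕ → Fin n,
      v 0 = i ∧ v m = j ∧ ∀ s, s < m → A (v s) (v (s + 1)) ≠ 0 with hPdef
  have hex : ∃ m, P m := path_of_reach (reach_of_irreducible hA i j)
  set m₀ := Nat.find hex with hm₀def
  obtain ⟨v, hv0, hvm, hedge⟩ : P m₀ := Nat.find_spec hex
  have hmin : ∀ k, k < m₀ → ¬ P k := fun k hk => Nat.find_min hex hk
  -- no early arrival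
  have htrunc : ∀ a, a < m₀ → v a ≠ j := by
    intro a ha hj
    exact hmin a ha ⟨v, hv0, hj, fun s hs => hedge s (by omega)⟩
  -- no shortcuts
  have hshort : ∀ a c, a + 1 < c → c ≤ m₀ → A (v a) (v c) = 0 := by
    intro a c hac hc
    by_contra hne
    have hd : c - a - 1 ≥ 1 := by omega
    apply hmin (m₀ - (c - a - 1)) (by omega)
    set d := c - a - 1 with hddef
    refine ⟨fun r => if r ≤ a then v r else v (r + d), by simp [hv0], ?_, ?_⟩
    · show (if m₀ - d ≤ a then v (m₀ - d) else v (m₀ - d + d)) = j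
      rw [if_neg (by omega), show m₀ - d + d = m₀ by omega]
      exact hvm
    · intro s hs
      show A (if s ≤ a then v s else v (s + d)) (if s + 1 ≤ a then v (s + 1) else v (s + 1 + d))
          ≠ 0
      by_cases h1 : s + 1 ≤ a
      · rw [if_pos (by omega), if_pos h1]
        exact hedge s (by omega)
      · by_cases h2 : s ≤ a
        · have hsa : s = a := by omega
          rw [if_pos h2, if_neg h1, hsa, show a + 1 + d = c by omega]
          exact hne
        · rw [if_neg h2, if_neg h1, show s + 1 + d = s + d + 1 by omega]
          exact hedge (s + d) (by omega)
  -- injectivity of the path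
  have hinj : ∀ a b, a < b → b ≤ m₀ → v a ≠ v b := by
    intro a b hab hb heq
    rcases eq_or_lt_of_le hb with h1 | h1
    · exact htrunc a (by omega) (by rw [heq, h1, hvm])
    · have h2 := hshort a (b + 1) (by omega) (by omega)
      rw [heq] at h2
      exact hedge b h1 h2
  -- the vertex set of the path
  set Vset : Finset (Fin n) := (Finset.range (m₀ + 1)).image v with hVdef
  have hmem : ∀ t, t ≤ m₀ → v t ∈ Vset := fun t ht =>
    Finset.mem_image.mpr ⟨t, Finset.mem_range.mpr (by omega), rfl⟩
  have hjV : j ∈ Vset := hvm ▸ hmem m₀ le_rfl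
  have hiV : i ∈ Vset := hv0 ▸ hmem 0 (by omega)
  -- the specialized matrix over F
  set N₃ : Matrix (Fin n) (Fin n) F := Matrix.of fun a b =>
    if a = j then (if b = i then 1 else 0)
    else if a ∈ Vset then (if a = b then (0 : F) else A a b)
    else (if a = b then 1 else 0) with hN₃def
  -- N₃ has nonzero determinant
  have hN₃det : N₃.det ≠ 0 := by
    set p : Fin n → Prop := fun a => a ∈ Vset with hpdef
    set e : {a // p a} ⊕ {a // ¬ p a} ≃ Fin n := Equiv.sumCompl p with hedef
    set B : Matrix {a // p a} {a // p a} F := Matrix.of fun x y => N₃ x y with hBdef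
    set B₂ : Matrix {a // p a} {a // ¬ p a} F := Matrix.of fun x y => N₃ x y with hB₂def
    have hsub : N₃.submatrix e e = Matrix.fromBlocks B B₂ 0 1 := by
      ext x y
      rcases x with x | x <;> rcases y with y | y
      · simp [Matrix.submatrix_apply, hedef, hBdef]
      · simp [Matrix.submatrix_apply, hedef, hB₂def]
      · have hxV : (↑x : Fin n) ∉ Vset := x.2
        have hxj : (↑x : Fin n) ≠ j := fun h => hxV (h ▸ hjV)
        have hxy : (↑x : Fin n) ≠ ↑y := fun h => hxV (h ▸ y.2)
        simp [Matrix.submatrix_apply, hedef, hN₃def, hxj, hxy, hxV]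
      · have hxV : (↑x : Fin n) ∉ Vset := x.2
        have hxj : (↑x : Fin n) ≠ j := fun h => hxV (h ▸ hjV)
        simp [Matrix.submatrix_apply, hedef, hN₃def, hxj, hxV, Matrix.one_apply,
          Subtype.ext_iff]
    have hdet1 : N₃.det = B.det := by
      rw [← Matrix.det_submatrix_equiv_self e N₃, hsub, Matrix.det_fromBlocks_zero₂₁,
        Matrix.det_one, mul_one]
    -- reindex the V-block by the path
    have hw : ∀ t : Fin (m₀ + 1), p (v ↑t) := fun t => hmem ↑t (Nat.lt_succ_iff.mp t.isLt)
    set w : Fin (m₀ + 1) → {a // p a} := fun t => ⟨v ↑t, hw t⟩ with hwdef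
    have hwbij : Function.Bijective w := by
      constructor
      · intro s t hst
        have hval : v ↑s = v ↑t := congrArg Subtype.val hst
        by_contra hne
        have hne' : (s : ℕ) ≠ (t : ℕ) := fun h => hne (Fin.ext h)
        rcases Nat.lt_or_ge (s : ℕ) (t : ℕ) with h | h
        · exact hinj s t h (Nat.lt_succ_iff.mp t.isLt) hval
        · exact hinj t s (by omega) (Nat.lt_succ_iff.mp s.isLt) hval.symm
      · rintro ⟨x, hx⟩
        obtain ⟨t, ht, rfl⟩ := Finset.mem_image.mp hx
        exact ⟨⟨t, Finset.mem_range.mp ht⟩, Subtype.ext rfl⟩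
    set e₂ : Fin (m₀ + 1) ≃ {a // p a} := Equiv.ofBijective w hwbij with he₂def
    set ρ : Equiv.Perm (Fin (m₀ + 1)) :=
      ⟨fun t => t - 1, fun t => t + 1, fun t => by simp, fun t => by simp⟩ with hρdef
    set T : Matrix (Fin (m₀ + 1)) (Fin (m₀ + 1)) F :=
      (B.submatrix e₂ e₂).submatrix ρ id with hTdef
    have hTapp : ∀ s t : Fin (m₀ + 1), T s t = N₃ (v ↑(s - 1)) (v ↑t) := fun s t => rfl
    have htri : T.BlockTriangular OrderDual.toDual := by
      intro s t hst
      have hst' : s < t := by simpa using hst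
      rw [hTapp]
      by_cases hs : s = 0
      · subst hs
        have h1 : ((0 - 1 : Fin (m₀ + 1)) : ℕ) = m₀ := by
          rw [Fin.coe_sub_one, if_pos rfl]
        have ht0 : (t : ℕ) ≠ 0 := by
          intro h
          exact absurd (Fin.ext h : t = 0) (by exact fun hh => by simp [hh] at hst')
        have hvti : v ↑t ≠ i := by
          rw [← hv0]
          exact fun h => hinj 0 ↑t (by omega) (Nat.lt_succ_iff.mp t.isLt) h.symm
        rw [h1, hvm]
        simp [hN₃def, hvti]
      · have h1 : ((s - 1 : Fin (m₀ + 1)) : ℕ) = (s : ℕ) - 1 := by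
          rw [Fin.coe_sub_one, if_neg hs]
        have hs0 : (s : ℕ) ≠ 0 := fun h => hs (Fin.ext h)
        have ha : (s : ℕ) - 1 < m₀ := by
          have := Nat.lt_succ_iff.mp s.isLt
          have := Nat.lt_succ_iff.mp t.isLt
          have : (s : ℕ) < (t : ℕ) := hst'
          omega
        have hja : v ((s : ℕ) - 1) ≠ j := by
          rw [← hvm]; exact hinj ((s : ℕ) - 1) m₀ ha le_rfl
        have haV : v ((s : ℕ) - 1) ∈ Vset := hmem _ (le_of_lt ha)
        rw [h1]
        by_cases heq : v ((s : ℕ) - 1) = v ↑t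
        · have htj : v ↑t ≠ j := heq ▸ hja
          have htV : v ↑t ∈ Vset := heq ▸ haV
          simp [hN₃def, htj, htV, heq]
        · simp only [hN₃def, Matrix.of_apply, if_neg hja, if_pos haV, if_neg heq]
          exact hshort ((s : ℕ) - 1) ↑t
            (by have : (s : ℕ) < (t : ℕ) := hst'; omega)
            (Nat.lt_succ_iff.mp t.isLt)
    have hdiag : ∀ t : Fin (m₀ + 1), T t t ≠ 0 := by
      intro t
      rw [hTapp]
      by_cases ht : t = 0
      · subst ht
        have h1 : ((0 - 1 : Fin (m₀ + 1)) : ℕ) = m₀ := by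
          rw [Fin.coe_sub_one, if_pos rfl]
        rw [h1, hvm]
        simp [hN₃def, hv0]
      · have h1 : ((t - 1 : Fin (m₀ + 1)) : ℕ) = (t : ℕ) - 1 := by
          rw [Fin.coe_sub_one, if_neg ht]
        have ht0 : (t : ℕ) ≠ 0 := fun h => ht (Fin.ext h)
        have htm : (t : ℕ) ≤ m₀ := Nat.lt_succ_iff.mp t.isLt
        have ha : (t : ℕ) - 1 < m₀ := by omega
        have hja : v ((t : ℕ) - 1) ≠ j := by
          rw [← hvm]; exact hinj ((t : ℕ) - 1) m₀ ha le_rfl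
        have haV : v ((t : ℕ) - 1) ∈ Vset := hmem _ (le_of_lt ha)
        have hneq : v ((t : ℕ) - 1) ≠ v ↑t := hinj _ _ (by omega) htm
        rw [h1]
        simp only [hN₃def, Matrix.of_apply, if_neg hja, if_pos haV, if_neg hneq]
        have := hedge ((t : ℕ) - 1) ha
        rw [show (t : ℕ) - 1 + 1 = (t : ℕ) by omega] at this
        exact this
    have hTdet : T.det ≠ 0 := by
      rw [Matrix.det_of_lowerTriangular T htri]
      exact Finset.prod_ne_zero_iff.mpr fun t _ => hdiag t
    have hBdet : B.det ≠ 0 := by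
      intro h
      have h2 : T.det = (Equiv.Perm.sign ρ : ℤ) * (B.submatrix e₂ e₂).det :=
        Matrix.det_permute ρ (B.submatrix e₂ e₂)
      rw [Matrix.det_submatrix_equiv_self e₂ B, h, mul_zero] at h2
      exact hTdet h2
    rw [hdet1]
    exact hBdet
  -- the matrix over F[X]
  set N₂ : Matrix (Fin n) (Fin n) (Polynomial F) := Matrix.of fun a b =>
    if a = j then (if b = i then 1 else 0)
    else if a ∈ Vset then (if a = b then 0 else Polynomial.C (A a b))
    else (if a = b then 1 else Polynomial.X * Polynomial.C (A a b)) with hN₂def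
  have hmap : (Polynomial.evalRingHom (0 : F)).mapMatrix N₂ = N₃ := by
    ext a b
    simp only [RingHom.mapMatrix_apply, Matrix.map_apply, hN₂def, hN₃def, Matrix.of_apply]
    split_ifs <;> simp
  have hN₂det : N₂.det ≠ 0 := by
    intro h
    apply hN₃det
    rw [← hmap, ← RingHom.map_det, h, map_zero]
  -- the specialization homomorphism
  set g : Fin n → RatFunc F := fun k =>
    (if k ∈ Vset then 0 else (RatFunc.X)⁻¹) - RatFunc.C (A k k) with hgdef
  set ψ : MvPolynomial (Fin n) F →+* RatFunc F := eval₂Hom RatFunc.C g with hψdef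
  set d : Fin n → RatFunc F := fun a => if a ∈ Vset then 1 else RatFunc.X with hddef
  have hMst : ∀ a b, Mst a b = (if a = b then X a else 0) + C (A a b) := by
    intro a b
    simp [hMstdef, Matrix.add_apply, Matrix.diagonal_apply, Matrix.map_apply]
  have key : Matrix.diagonal d * ((ψ.mapMatrix Mst).updateRow j (Pi.single i 1))
      = (algebraMap (Polynomial F) (RatFunc F)).mapMatrix N₂ := by
    ext a b
    rw [Matrix.diagonal_mul]
    by_cases haj : a = j
    · subst haj
      rw [Matrix.updateRow_self]
      simp only [RingHom.mapMatrix_apply, Matrix.map_apply, hN₂def, Matrix.of_apply,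
        if_pos rfl, hddef, if_pos hjV, one_mul, Pi.single_apply]
      split_ifs <;> simp
    · rw [Matrix.updateRow_ne haj]
      simp only [RingHom.mapMatrix_apply, Matrix.map_apply, hN₂def, Matrix.of_apply,
        if_neg haj, hMst, map_add, hψdef]
      by_cases haV : a ∈ Vset
      · simp only [hddef, if_pos haV, one_mul]
        by_cases hab : a = b
        · subst hab
          simp [hgdef, haV]
        · simp [hab, RatFunc.algebraMap_C]
      · simp only [hddef, if_neg haV]
        by_cases hab : a = b
        · subst hab
          simp only [eq_self_iff_true, if_true, if_neg haV]
          rw [eval₂Hom_X', eval₂Hom_C]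
          simp only [hgdef, if_neg haV]
          rw [sub_add_cancel, mul_inv_cancel₀ RatFunc.X_ne_zero]
          simp
        · simp only [if_neg hab, if_neg haV]
          rw [map_mul, RatFunc.algebraMap_X, RatFunc.algebraMap_C]
          simp [hab]
  -- put everything together
  have h1 : ψ (Mst.adjugate i j) = 0 := by rw [hzero]; exact map_zero ψ
  have h2 : (Matrix.adjugate (ψ.mapMatrix Mst)) i j = 0 := by
    rw [← RingHom.map_adjugate]
    simpa [RingHom.mapMatrix_apply, Matrix.map_apply] using h1
  have h3 : ((ψ.mapMatrix Mst).updateRow j (Pi.single i 1)).det = 0 := by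
    rw [← Matrix.adjugate_apply]; exact h2
  have h4 : ((algebraMap (Polynomial F) (RatFunc F)).mapMatrix N₂).det = 0 := by
    rw [← key, Matrix.det_mul, h3, mul_zero]
  have h5 : algebraMap (Polynomial F) (RatFunc F) N₂.det = 0 := by
    rw [RingHom.map_det]; exact h4
  exact hN₂det (RatFunc.algebraMap_injective F (by rw [h5, map_zero]))
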